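/- Let g : ℝ^d → ℝ be a convex function, let X ⊆ ℝ^d be a compact convex set, and let ε > 0. Then there exists a nonempty finite family of affine functions (x ↦ ⟨aᵢ, x⟩ + bᵢ), i ∈ I, such that the max-affine function h(x) = max_{i ∈ I} (⟨aᵢ, x⟩ + bᵢ) satisfies h(x) < g(x) for all x ∈ X and sup_{x ∈ X} (g(x) − h(x)) < ε. -/

import Mathlib

open InnerProductSpace


lemma exists_affine_minorant {d : ℕ} (g : EuclideanSpace ℝ (Fin d) → ℝ)
    (hg : ConvexOn ℝ Set.univ g) (y : EuclideanSpace ℝ (Fin d)) {δ : ℝ} (hδ : 0 < δ) :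
    ∃ (a : EuclideanSpace ℝ (Fin d)) (b : ℝ),
      (∀ x, (inner ℝ a x : ℝ) + b ≤ g x) ∧ g y - ((inner ℝ a y : ℝ) + b) < δ := by
  have hcont : Continuous g := by
    have := hg.continuousOn isOpen_univ
    rwa [continuousOn_univ] at this
  have hconv : Convex ℝ {p : EuclideanSpace ℝ (Fin d) × ℝ | g p.1 ≤ p.2} := by
    have := hg.convex_epigraph
    simpa using this
  have hclosed : IsClosed {p : EuclideanSpace ℝ (Fin d) × ℝ | g p.1 ≤ p.2} :=
    isClosed_le (hcont.comp continuous_fst) continuous_snd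
  have hnotmem : ((y, g y - δ) : EuclideanSpace ℝ (Fin d) × ℝ) ∉
      {p : EuclideanSpace ℝ (Fin d) × ℝ | g p.1 ≤ p.2} := by
    simp only [Set.mem_setOf_eq]
    push_neg; linarith
  obtain ⟨f, u, hfu, hE⟩ := geometric_hahn_banach_point_closed hconv hclosed hnotmem
  set c := f ((0 : EuclideanSpace ℝ (Fin d)), (1 : ℝ)) with hcdef
  have hdecomp : ∀ (x : EuclideanSpace ℝ (Fin d)) (t : ℝ), f (x, t) = f (x, 0) + t * c := by
    intro x t
    have hpt : ((x, t) : EuclideanSpace ℝ (Fin d) × ℝ)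
        = (x, 0) + t • ((0 : EuclideanSpace ℝ (Fin d)), (1 : ℝ)) := by
      simp [Prod.ext_iff]
    rw [hpt, map_add, map_smul, smul_eq_mul]
  have hall : ∀ x, u < f (x, 0) + g x * c := by
    intro x
    have := hE (x, g x) (by simp only [Set.mem_setOf_eq]; exact le_rfl)
    rwa [hdecomp] at this
  have hcge : 0 ≤ c := by
    by_contra h
    push_neg at h
    set n := max 0 ((u - f (y, 0) - g y * c) / c) with hn
    have hn0 : 0 ≤ n := le_max_left _ _
    have h1 := hE (y, g y + n) (by simp only [Set.mem_setOf_eq]; linarith)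
    rw [hdecomp] at h1
    have h2 : (u - f (y, 0) - g y * c) / c ≤ n := le_max_right _ _
    rw [div_le_iff_of_neg h] at h2
    nlinarith
  have hfu' : f (y, 0) + (g y - δ) * c < u := by
    have := hfu; rwa [hdecomp] at this
  have hc : 0 < c := by
    rcases hcge.lt_or_eq with h | h
    · exact h
    · exfalso; have := hall y; nlinarith
  set L : EuclideanSpace ℝ (Fin d) →L[ℝ] ℝ :=
    f.comp (ContinuousLinearMap.inl ℝ (EuclideanSpace ℝ (Fin d)) ℝ) with hL
  have hrw : ∀ r : ℝ, -c⁻¹ * r + u / c = (u - r) / c := by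
    intro r; field_simp; ring
  have hLx : ∀ x : EuclideanSpace ℝ (Fin d), (((-c⁻¹) • L) x : ℝ) = -c⁻¹ * f (x, 0) := by
    intro x; simp [hL]
  refine ⟨(toDual ℝ (EuclideanSpace ℝ (Fin d))).symm ((-c⁻¹) • L), u / c, ?_, ?_⟩
  · intro x
    rw [toDual_symm_apply, hLx, hrw, div_le_iff₀ hc]
    have := hall x; linarith
  · rw [toDual_symm_apply, hLx, hrw]
    have h2 : g y - δ < (u - f (y, 0)) / c := by
      rw [lt_div_iff₀ hc]; linarith
    linarith


/-- A *max-affine* function on ℝ^d: `h x = max_{i ∈ I} (⟪aᵢ, x⟫ + bᵢ)` for a nonempty finite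
index set; such functions are exactly those realized by input-convex ReLU neural networks. -/
def MaxAffine {d : ℕ} (h : EuclideanSpace ℝ (Fin d) → ℝ) : Prop :=
  ∃ (n : ℕ) (a : Fin (n + 1) → EuclideanSpace ℝ (Fin d)) (b : Fin (n + 1) → ℝ),
    ∀ x, h x = Finset.univ.sup' Finset.univ_nonempty
      (fun i : Fin (n + 1) => (inner ℝ (a i) x : ℝ) + b i)

/-- **Lemma B.3 of the paper**: any convex function on ℝ^d can be uniformly strictly
underapproximated within `ε` on a compact convex set by a max-affine function. -/
theorem convex_strict_underapprox_maxAffine {d : ℕ}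
    (g : EuclideanSpace ℝ (Fin d) → ℝ) (hg : ConvexOn ℝ Set.univ g)
    (X : Set (EuclideanSpace ℝ (Fin d))) (hX : IsCompact X) (hXconv : Convex ℝ X)
    (ε : ℝ) (hε : 0 < ε) :
    ∃ h : EuclideanSpace ℝ (Fin d) → ℝ, MaxAffine h ∧ (∀ x ∈ X, h x < g x) ∧
      sSup ((fun x => g x - h x) '' X) < ε := by
  have hcont : Continuous g := by
    have := hg.continuousOn isOpen_univ
    rwa [continuousOn_univ] at this
  rcases X.eq_empty_or_nonempty with rfl | hXne
  · refine ⟨fun x => (inner ℝ (0 : EuclideanSpace ℝ (Fin d)) x : ℝ) + 0,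
      ⟨0, fun _ => 0, fun _ => 0, fun x => by simp [Finset.sup'_const]⟩, by simp, ?_⟩
    simp [Real.sSup_empty, hε]
  · have h8 : (0:ℝ) < ε / 8 := by linarith
    choose a b hab hnear using fun y => exists_affine_minorant g hg y h8
    set U : EuclideanSpace ℝ (Fin d) → Set (EuclideanSpace ℝ (Fin d)) :=
      fun y => {x | g x - ((inner ℝ (a y) x : ℝ) + b y) < ε / 4} with hU
    have hUopen : ∀ y, IsOpen (U y) := by
      intro y
      exact isOpen_lt (hcont.sub ((continuous_const.inner continuous_id).add continuous_const)) continuous_const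
    have hyU : ∀ y, y ∈ U y := fun y => by
      simp only [hU, Set.mem_setOf_eq]; linarith [hnear y]
    obtain ⟨t, htX, htfin, hcover⟩ := hX.elim_finite_subcover_image
      (fun y (_ : y ∈ X) => hUopen y) (fun x hx => Set.mem_iUnion₂.2 ⟨x, hx, hyU x⟩)
    classical
    set s : Finset (EuclideanSpace ℝ (Fin d)) := htfin.toFinset with hs
    have hsne : s.Nonempty := by
      obtain ⟨x₀, hx₀⟩ := hXne
      obtain ⟨y, hy, _⟩ := Set.mem_iUnion₂.1 (hcover hx₀)
      exact ⟨y, htfin.mem_toFinset.2 hy⟩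
    set n : ℕ := s.card - 1 with hn
    have hcard : s.card = n + 1 := (Nat.succ_pred_eq_of_pos (Finset.card_pos.2 hsne)).symm
    set e : Fin (n + 1) → EuclideanSpace ℝ (Fin d) :=
      fun i => (s.equivFin.symm (Fin.cast hcard.symm i) : EuclideanSpace ℝ (Fin d)) with he
    set h : EuclideanSpace ℝ (Fin d) → ℝ := fun x =>
      Finset.univ.sup' Finset.univ_nonempty
        (fun i : Fin (n + 1) => (inner ℝ (a (e i)) x : ℝ) + (b (e i) - ε / 2)) with hh
    refine ⟨h, ⟨n, fun i => a (e i), fun i => b (e i) - ε / 2, fun x => rfl⟩, ?_, ?_⟩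
    · intro x hx
      rw [hh]
      rw [Finset.sup'_lt_iff]
      intro i _
      have := hab (e i) x
      linarith
    · have hbound : ∀ r ∈ (fun x => g x - h x) '' X, r ≤ 3 * ε / 4 := by
        rintro r ⟨x, hx, rfl⟩
        obtain ⟨y, hy, hxU⟩ := Set.mem_iUnion₂.1 (hcover hx)
        have hys : y ∈ s := htfin.mem_toFinset.2 hy
        set i : Fin (n + 1) := Fin.cast hcard (s.equivFin ⟨y, hys⟩) with hi
        have hei : e i = y := by
          simp [he, hi, Fin.cast_cast]
        have hle : (inner ℝ (a y) x : ℝ) + (b y - ε / 2) ≤ h x := by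
          have := Finset.le_sup' (f := fun i : Fin (n + 1) =>
            (inner ℝ (a (e i)) x : ℝ) + (b (e i) - ε / 2)) (Finset.mem_univ i)
          rwa [hei] at this
        have hxU' : g x - ((inner ℝ (a y) x : ℝ) + b y) < ε / 4 := hxU
        linarith
      calc sSup ((fun x => g x - h x) '' X) ≤ 3 * ε / 4 :=
            csSup_le (hXne.image _) hbound
        _ < ε := by linarith
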